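/- Let (A_i)_{i ∈ ℤ} be a sequence of matrices in GL(2,ℝ), and for a unit vector v define g^n(v) = |det B_n| / ‖B_n v‖² where B_n = A_{n-1}···A_0 for n > 0 (and suitably for n ≤ 0). If there exist two unit vectors u ≠ ±v at some point with g^n(v) ≥ 1 for all n ≥ 0 and g^n(u) ≥ 1 for all n ≥ 0, and additionally g^n(w) ≥ 1 for all n ≥ 0 for every w in the arc between u and v, then for every n, ‖B_n w‖² ≤ |det B_n| for all such w; in particular the norms ‖B_n w‖ are uniformly comparable (ratio bounded by a constant depending on the angle between u and v) — i.e., B_n restricted to the span behaves conformally up to bounded distortion. -/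

import Mathlib

noncomputable section

lemma normsq2 (x : EuclideanSpace ℝ (Fin 2)) : ‖x‖ ^ 2 = x 0 ^ 2 + x 1 ^ 2 := by
  rw [EuclideanSpace.norm_eq, Real.sq_sqrt (by positivity)]
  simp [Fin.sum_univ_two, sq_abs]

lemma det_mul_d (f : EuclideanSpace ℝ (Fin 2) →ₗ[ℝ] EuclideanSpace ℝ (Fin 2))
    (u v : EuclideanSpace ℝ (Fin 2)) :
    LinearMap.det f * (u 0 * v 1 - u 1 * v 0) =
      f u 0 * f v 1 - f u 1 * f v 0 := by
  set b := (EuclideanSpace.basisFun (Fin 2) ℝ).toBasis with hb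
  set M := LinearMap.toMatrix b b f with hM
  have hdet : LinearMap.det f = M.det := (LinearMap.det_toMatrix b f).symm
  have happ : ∀ x : EuclideanSpace ℝ (Fin 2), ∀ i,
      f x i = M i 0 * x 0 + M i 1 * x 1 := by
    intro x i
    have key := LinearMap.toMatrix_mulVec_repr b b f x
    have h1 : b.repr (f x) i = (M.mulVec (b.repr x)) i := by rw [key]
    simpa [hb, Matrix.mulVec, dotProduct, Fin.sum_univ_two] using h1
  rw [hdet, happ u 0, happ u 1, happ v 0, happ v 1, Matrix.det_fin_two]
  ring

lemma dne (u v : EuclideanSpace ℝ (Fin 2)) (hu : ‖u‖ = 1) (hv : ‖v‖ = 1)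
    (huv : u ≠ v) (huv' : u ≠ -v) : u 0 * v 1 - u 1 * v 0 ≠ 0 := by
  intro hd0
  have hiu : (inner ℝ u v : ℝ) = u 0 * v 0 + u 1 * v 1 := by
    simp [PiLp.inner_apply, RCLike.inner_apply, Fin.sum_univ_two, mul_comm]
  have h1 : u 0 ^ 2 + u 1 ^ 2 = 1 := by
    have h := normsq2 u; rw [hu] at h; linarith
  have h2 : v 0 ^ 2 + v 1 ^ 2 = 1 := by
    have h := normsq2 v; rw [hv] at h; linarith
  have hsq : (inner ℝ u v : ℝ) ^ 2 = 1 := by rw [hiu]; nlinarith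
  have hor := mul_eq_zero.mp (by nlinarith : ((inner ℝ u v : ℝ) - 1) * ((inner ℝ u v : ℝ) + 1) = 0)
  rcases hor with h | h
  · have h' : (inner ℝ u v : ℝ) = 1 := by linarith
    exact huv ((inner_eq_one_iff_of_norm_eq_one hu hv).mp h')
  · have h : (inner ℝ u v : ℝ) = -1 := by linarith
    have hnv : ‖(-v : EuclideanSpace ℝ (Fin 2))‖ = 1 := by rwa [norm_neg]
    have : (inner ℝ u (-v) : ℝ) = 1 := by rw [inner_neg_right, h]; ring
    exact huv' ((inner_eq_one_iff_of_norm_eq_one hu hnv).mp this)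

/-- If two distinct unit directions `u ≠ ± v`, and every unit vector on the arc between
them, are critical for the cocycle `B n = A_{n-1} ⋯ A_0` (i.e. `g^n(w) ≥ 1`, that is
`‖B n w‖² ≤ |det B n|`, for all `n ≥ 0`), then the norms `‖B n u‖` and `‖B n v‖` are
uniformly comparable: the cocycle behaves conformally up to bounded distortion on the
span of `u` and `v`. -/
theorem stmt10
    (A : ℕ → (EuclideanSpace ℝ (Fin 2) ≃ₗ[ℝ] EuclideanSpace ℝ (Fin 2)))
    (B : ℕ → (EuclideanSpace ℝ (Fin 2) →ₗ[ℝ] EuclideanSpace ℝ (Fin 2)))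
    (hB0 : B 0 = LinearMap.id)
    (hBs : ∀ n, B (n + 1) =
      ((A n : EuclideanSpace ℝ (Fin 2) →ₗ[ℝ] EuclideanSpace ℝ (Fin 2))).comp (B n))
    (u v : EuclideanSpace ℝ (Fin 2)) (hu : ‖u‖ = 1) (hv : ‖v‖ = 1)
    (huv : u ≠ v) (huv' : u ≠ -v)
    (hcrit : ∀ n : ℕ, ∀ t ∈ Set.Icc (0 : ℝ) 1,
      1 ≤ |LinearMap.det (B n)| /
        ‖B n (‖(1 - t) • u + t • v‖⁻¹ • ((1 - t) • u + t • v))‖ ^ 2) :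
    (∀ n : ℕ, ∀ t ∈ Set.Icc (0 : ℝ) 1,
      ‖B n (‖(1 - t) • u + t • v‖⁻¹ • ((1 - t) • u + t • v))‖ ^ 2 ≤
        |LinearMap.det (B n)|) ∧
    ∃ C : ℝ, 0 < C ∧ ∀ n : ℕ,
      ‖B n u‖ ≤ C * ‖B n v‖ ∧ ‖B n v‖ ≤ C * ‖B n u‖ := by
  have part1 : ∀ n : ℕ, ∀ t ∈ Set.Icc (0 : ℝ) 1,
      ‖B n (‖(1 - t) • u + t • v‖⁻¹ • ((1 - t) • u + t • v))‖ ^ 2 ≤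
        |LinearMap.det (B n)| := by
    intro n t ht
    have h := hcrit n t ht
    set s := ‖B n (‖(1 - t) • u + t • v‖⁻¹ • ((1 - t) • u + t • v))‖ ^ 2 with hs
    rcases eq_or_lt_of_le (by positivity : (0:ℝ) ≤ s) with h0 | h0
    · rw [← h0]; exact abs_nonneg _
    · have := (one_le_div h0).mp h
      linarith
  refine ⟨part1, ?_⟩
  set d := u 0 * v 1 - u 1 * v 0 with hd
  have hdne : d ≠ 0 := dne u v hu hv huv huv'
  have hdpos : 0 < |d| := abs_pos.mpr hdne
  refine ⟨|d|⁻¹, by positivity, fun n => ?_⟩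
  set D := |LinearMap.det (B n)| with hD
  -- criticality at the endpoints
  have hBu : ‖B n u‖ ^ 2 ≤ D := by
    have h := part1 n 0 ⟨le_refl 0, zero_le_one⟩
    simpa [hu] using h
  have hBv : ‖B n v‖ ^ 2 ≤ D := by
    have h := part1 n 1 ⟨zero_le_one, le_refl 1⟩
    simpa [hv] using h
  -- determinant vs norms
  have key : D * |d| ≤ ‖B n u‖ * ‖B n v‖ := by
    have hid := det_mul_d (B n) u v
    have habs : D * |d| = |B n u 0 * B n v 1 - B n u 1 * B n v 0| := by
      rw [hD, ← abs_mul, hid]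
    rw [habs]
    have hnu := normsq2 (B n u)
    have hnv := normsq2 (B n v)
    have hsq : (B n u 0 * B n v 1 - B n u 1 * B n v 0) ^ 2 ≤ (‖B n u‖ * ‖B n v‖) ^ 2 := by
      rw [mul_pow, hnu, hnv]
      nlinarith [sq_nonneg (B n u 0 * B n v 0 + B n u 1 * B n v 1)]
    have h1 := Real.sqrt_le_sqrt hsq
    rwa [Real.sqrt_sq_eq_abs, Real.sqrt_sq (by positivity)] at h1
  set x := ‖B n u‖ with hx
  set y := ‖B n v‖ with hy
  have hx0 : 0 ≤ x := norm_nonneg _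
  have hy0 : 0 ≤ y := norm_nonneg _
  constructor
  · rcases eq_or_lt_of_le hx0 with h0 | h0
    · rw [← h0]; positivity
    · have h1 : x ^ 2 * |d| ≤ D * |d| := by
        exact mul_le_mul_of_nonneg_right hBu (abs_nonneg d)
      have h2 : |d| * x ≤ y := by nlinarith
      calc x = |d|⁻¹ * (|d| * x) := by field_simp
        _ ≤ |d|⁻¹ * y := by
            exact mul_le_mul_of_nonneg_left h2 (by positivity)
  · rcases eq_or_lt_of_le hy0 with h0 | h0
    · rw [← h0]; positivity
    · have h1 : y ^ 2 * |d| ≤ D * |d| := by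
        exact mul_le_mul_of_nonneg_right hBv (abs_nonneg d)
      have h2 : |d| * y ≤ x := by nlinarith
      calc y = |d|⁻¹ * (|d| * y) := by field_simp
        _ ≤ |d|⁻¹ * x := by
            exact mul_le_mul_of_nonneg_left h2 (by positivity)
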